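/- arXiv:0811.3928 — 2 statements merged into one kernel-verified Lean document; each statement's English description precedes it below -/
import Mathlib

section
/- Let Ω ⊆ ℝ² be open, let a, b : Ω → ℝ be differentiable at x₀ ∈ Ω, set c := 1 − a, and assume b² = a·c on Ω. Let P := ((a, b), (b, c)) and assume P(x₀) div P(x₀) = 0. Write f := ∂₁a + ∂₂b and g := ∂₁b + ∂₂c (evaluated at x₀), so that div P(x₀) = (f, g). Then at x₀ the partial derivatives of a satisfy the linear system (1/2 − a) ∂₁a − b ∂₂a = −a f and b ∂₁a + (1/2 − a) ∂₂a = (a − 1) g, and consequently |∇a(x₀)| ≤ 2 √(f² + g²) = 2 |div P(x₀)|. -/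
open Matrix

noncomputable section

/-- Partial derivative `∂_{x_j} f` of a scalar field on `ℝ²`. -/
def pd (j : Fin 2) (f : (Fin 2 → ℝ) → ℝ) (x : Fin 2 → ℝ) : ℝ :=
  fderiv ℝ f x (Pi.single j 1)

/-- Divergence of a matrix field: `(div P)_i = ∂_{x₁} P_{i1} + ∂_{x₂} P_{i2}`. -/
def matDiv (P : (Fin 2 → ℝ) → Matrix (Fin 2) (Fin 2) ℝ) (x : Fin 2 → ℝ) :
    Fin 2 → ℝ :=
  fun i => pd 0 (fun y => P y i 0) x + pd 1 (fun y => P y i 1) x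

private lemma stmt4_aux (a0 b0 f g p q : ℝ) (hb2 : b0 ^ 2 = a0 * (1 - a0))
    (key : p ^ 2 + q ^ 2 = 4 * (a0 * f) ^ 2 + 4 * ((a0 - 1) * g) ^ 2) :
    Real.sqrt (p ^ 2 + q ^ 2) ≤ 2 * Real.sqrt (f ^ 2 + g ^ 2) := by
  have haa : 0 ≤ a0 * (1 - a0) := hb2 ▸ sq_nonneg b0
  have ha0 : 0 ≤ a0 := by nlinarith [sq_nonneg a0]
  have ha1 : a0 ≤ 1 := by nlinarith [sq_nonneg (1 - a0)]
  have hle : p ^ 2 + q ^ 2 ≤ 4 * (f ^ 2 + g ^ 2) := by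
    nlinarith [sq_nonneg f, sq_nonneg g, sq_nonneg (a0 * f), sq_nonneg ((a0 - 1) * g)]
  have h2 : (2 : ℝ) * Real.sqrt (f ^ 2 + g ^ 2) = Real.sqrt (4 * (f ^ 2 + g ^ 2)) := by
    rw [show (4 : ℝ) = 2 ^ 2 by norm_num, Real.sqrt_mul (by positivity),
      Real.sqrt_sq (by norm_num)]
  rw [h2]
  exact Real.sqrt_le_sqrt hle

/-- Let `Ω ⊆ ℝ²` be open, `a, b : Ω → ℝ` differentiable at `x₀ ∈ Ω`, `c := 1 - a`,
`b² = a·c` on `Ω`, `P := ((a,b),(b,c))`, and `P(x₀) div P(x₀) = 0`. With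
`f := ∂₁a + ∂₂b` and `g := ∂₁b + ∂₂c` at `x₀` (so that `div P(x₀) = (f,g)`),
the partial derivatives of `a` at `x₀` satisfy the linear system
`(1/2 − a) ∂₁a − b ∂₂a = −a f` and `b ∂₁a + (1/2 − a) ∂₂a = (a − 1) g`,
and consequently `|∇a(x₀)| ≤ 2 √(f² + g²) = 2 |div P(x₀)|`. -/
theorem stmt4 (Ω : Set (Fin 2 → ℝ)) (hΩ : IsOpen Ω)
    (a b c : (Fin 2 → ℝ) → ℝ) (x₀ : Fin 2 → ℝ) (hx₀ : x₀ ∈ Ω)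
    (ha : DifferentiableAt ℝ a x₀) (hb : DifferentiableAt ℝ b x₀)
    (hc : c = fun y => 1 - a y)
    (hbc : ∀ y ∈ Ω, (b y) ^ 2 = a y * c y)
    (P : (Fin 2 → ℝ) → Matrix (Fin 2) (Fin 2) ℝ)
    (hP : ∀ y, P y = !![a y, b y; b y, c y])
    (hPdiv : (P x₀) *ᵥ (matDiv P x₀) = 0)
    (f g : ℝ)
    (hf : f = pd 0 a x₀ + pd 1 b x₀)
    (hg : g = pd 0 b x₀ + pd 1 c x₀) :
    matDiv P x₀ = ![f, g] ∧
    (1 / 2 - a x₀) * pd 0 a x₀ - b x₀ * pd 1 a x₀ = -(a x₀) * f ∧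
    b x₀ * pd 0 a x₀ + (1 / 2 - a x₀) * pd 1 a x₀ = (a x₀ - 1) * g ∧
    Real.sqrt ((pd 0 a x₀) ^ 2 + (pd 1 a x₀) ^ 2) ≤
      2 * Real.sqrt (f ^ 2 + g ^ 2) := by
  have hcd : DifferentiableAt ℝ c x₀ := by
    rw [hc]; exact (differentiableAt_const (1:ℝ)).sub ha
  -- fderiv of c is -fderiv a
  have hdc : fderiv ℝ c x₀ = -(fderiv ℝ a x₀) := by
    rw [hc, fderiv_const_sub]
  have hpdc : ∀ j, pd j c x₀ = - pd j a x₀ := by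
    intro j; unfold pd; rw [hdc]; simp
  -- components of P
  have h00 : (fun y => P y 0 0) = a := by funext y; rw [hP]; simp
  have h01 : (fun y => P y 0 1) = b := by funext y; rw [hP]; simp
  have h10 : (fun y => P y 1 0) = b := by funext y; rw [hP]; simp
  have h11 : (fun y => P y 1 1) = c := by funext y; rw [hP]; simp
  have hdiv : matDiv P x₀ = ![f, g] := by
    funext i
    fin_cases i <;>
      simp [matDiv, h00, h01, h10, h11, hf, hg]
  -- key derivative relation: b * pd j b = (1/2 - a) * pd j a
  have hkey : ∀ j, 2 * b x₀ * pd j b x₀ = (1 - 2 * a x₀) * pd j a x₀ := by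
    intro j
    have heq : (fun y => b y * b y) =ᶠ[nhds x₀] (fun y => a y * c y) := by
      filter_upwards [hΩ.mem_nhds hx₀] with y hy
      have := hbc y hy; nlinarith [this]
    have hde : fderiv ℝ (fun y => b y * b y) x₀ = fderiv ℝ (fun y => a y * c y) x₀ :=
      heq.fderiv_eq
    rw [fderiv_fun_mul hb hb, fderiv_fun_mul ha hcd, hdc] at hde
    have := congrArg (fun L => L (Pi.single j 1)) hde
    simp only [ContinuousLinearMap.add_apply, ContinuousLinearMap.smul_apply,
      ContinuousLinearMap.neg_apply, smul_eq_mul] at this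
    have hca : c x₀ = 1 - a x₀ := by rw [hc]
    rw [hca] at this
    unfold pd
    linear_combination this
  -- mulVec equations
  have hPd := hPdiv
  rw [hdiv, hP] at hPd
  have e1 : a x₀ * f + b x₀ * g = 0 := by
    have := congrFun hPd 0
    simpa [Matrix.mulVec, dotProduct, Fin.sum_univ_two] using this
  have e2 : b x₀ * f + c x₀ * g = 0 := by
    have := congrFun hPd 1
    simpa [Matrix.mulVec, dotProduct, Fin.sum_univ_two] using this
  have hca : c x₀ = 1 - a x₀ := by rw [hc]
  set p := pd 0 a x₀
  set q := pd 1 a x₀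
  have hk0 := hkey 0
  have hk1 := hkey 1
  have hpc0 := hpdc 0
  have hpc1 := hpdc 1
  -- first equation
  have E1 : (1 / 2 - a x₀) * p - b x₀ * q = -(a x₀) * f := by
    have hbg : b x₀ * g = -(a x₀) * f := by linarith
    rw [hg] at hbg
    linear_combination hbg - (1/2) * hk0 - b x₀ * hpc1
  have E2 : b x₀ * p + (1 / 2 - a x₀) * q = (a x₀ - 1) * g := by
    have hbf : b x₀ * f = -(c x₀) * g := by linarith
    rw [hf, hca] at hbf
    linear_combination hbf - (1/2) * hk1
  refine ⟨hdiv, E1, E2, ?_⟩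
  -- the inequality
  have hb2 : (b x₀) ^ 2 = a x₀ * (1 - a x₀) := by
    have := hbc x₀ hx₀; rw [hca] at this; linarith
  have key : p ^ 2 + q ^ 2 = 4 * (a x₀ * f) ^ 2 + 4 * ((a x₀ - 1) * g) ^ 2 := by
    linear_combination (4*((1/2 - a x₀)*p - b x₀*q) + 4*(-(a x₀)*f)) * E1 +
      (4*(b x₀*p + (1/2 - a x₀)*q) + 4*((a x₀-1)*g)) * E2 - (4*(p^2+q^2)) * hb2
  exact stmt4_aux (a x₀) (b x₀) f g p q hb2 key
end
end

section
/- Let Ω ⊆ ℝ² be open and let P : Ω → ℝ^{2×2} be continuously differentiable on Ω, such that for every x ∈ Ω the matrix P(x) is symmetric, P(x)² = P(x), trace P(x) = 1, and P(x) div P(x) = 0. Let x₀, x₁ ∈ Ω be such that the closed line segment L from x₀ to x₁ is contained in Ω and P(x₀)(x₁ − x₀) = 0. Then P(y) = P(x₀) for every y ∈ L. -/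
open Matrix

noncomputable section

lemma keyT (p q p0 p1 q0 q1 : ℝ)
    (hC : p - p^2 = q^2)
    (hD0 : (1-2*p)*p0 = 2*q*q0)
    (hD1 : (1-2*p)*p1 = 2*q*q1)
    (hE1 : p*(p0+q1) + q*(q0-p1) = 0)
    (hE2 : q*(p0+q1) + (1-p)*(q0-p1) = 0) :
    ((p-1)*p0 + q*p1 = 0) ∧ (q*p0 - p*p1 = 0) ∧
    ((p-1)*q0 + q*q1 = 0) ∧ (q*q0 - p*q1 = 0) := by
  refine ⟨?_, ?_, ?_, ?_⟩
  · linear_combination (2*q1)*hC + (p-1)*hD0 - q*hD1 + (2*p-2)*hE1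
  · linear_combination (-2*p1)*hC + q*hD0 + p*hD1 + (2*q)*hE1
  · linear_combination (-2*p1)*hC + q*hD0 + (p-1)*hD1 + (2*q)*hE1 - hE2
  · linear_combination (-2*q1)*hC - p*hD0 + q*hD1 + (1-2*p)*hE1

lemma keyI (p q r s v0 v1 : ℝ)
    (hCr : r - r^2 = s^2)
    (hK1 : r*v0 + s*v1 = 0)
    (hK2 : s*v0 + (1-r)*v1 = 0) :
    (p*v0+q*v1)^2 + (q*v0+(1-p)*v1)^2 = (v0^2+v1^2)*((p-r)^2+(q-s)^2) := by
  linear_combination (v0^2+v1^2)*hCr + (2*p*v0 - v0 + 2*q*v1)*hK1 + (v1 - 2*p*v1 + 2*q*v0)*hK2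

section
variable (Ω : Set (Fin 2 → ℝ)) (hΩ : IsOpen Ω)
    (P : (Fin 2 → ℝ) → Matrix (Fin 2) (Fin 2) ℝ)
    (hC1 : ∀ i j, ContDiffOn ℝ 1 (fun y => P y i j) Ω)
    (hsymm : ∀ x ∈ Ω, (P x).IsSymm)
    (hproj : ∀ x ∈ Ω, P x * P x = P x)
    (htr : ∀ x ∈ Ω, (P x).trace = 1)
    (heik : ∀ x ∈ Ω, (P x) *ᵥ (matDiv P x) = 0)

include hΩ hC1 hsymm hproj htr in
lemma basic_facts {z : Fin 2 → ℝ} (hz : z ∈ Ω) :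
    (P z 1 0 = P z 0 1) ∧ (P z 1 1 = 1 - P z 0 0) ∧
    (P z 0 0 - (P z 0 0)^2 = (P z 0 1)^2) := by
  have h10 : P z 1 0 = P z 0 1 := (hsymm z hz).apply 0 1
  have htrz := htr z hz
  rw [Matrix.trace_fin_two] at htrz
  have h00 : (P z * P z) 0 0 = P z 0 0 := by rw [hproj z hz]
  rw [Matrix.mul_apply, Fin.sum_univ_two] at h00
  rw [h10] at h00
  exact ⟨h10, by linarith, by nlinarith⟩

include hΩ hC1 hsymm hproj htr heik in
lemma keyderiv {z : Fin 2 → ℝ} (hz : z ∈ Ω) :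
    ((P z 0 0 - 1) * pd 0 (fun y => P y 0 0) z + P z 0 1 * pd 1 (fun y => P y 0 0) z = 0) ∧
    (P z 0 1 * pd 0 (fun y => P y 0 0) z - P z 0 0 * pd 1 (fun y => P y 0 0) z = 0) ∧
    ((P z 0 0 - 1) * pd 0 (fun y => P y 0 1) z + P z 0 1 * pd 1 (fun y => P y 0 1) z = 0) ∧
    (P z 0 1 * pd 0 (fun y => P y 0 1) z - P z 0 0 * pd 1 (fun y => P y 0 1) z = 0) := by
  set p : (Fin 2 → ℝ) → ℝ := fun y => P y 0 0 with hp
  set q : (Fin 2 → ℝ) → ℝ := fun y => P y 0 1 with hq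
  have hnz : Ω ∈ nhds z := hΩ.mem_nhds hz
  have hpdiff : DifferentiableAt ℝ p z :=
    ((hC1 0 0).contDiffAt hnz).differentiableAt one_ne_zero
  have hqdiff : DifferentiableAt ℝ q z :=
    ((hC1 0 1).contDiffAt hnz).differentiableAt one_ne_zero
  obtain ⟨-, -, hCz⟩ := basic_facts Ω hΩ P hC1 hsymm hproj htr hz
  -- the constraint function vanishes on Ω
  have hFz : (fun y => p y - p y * p y - q y * q y) =ᶠ[nhds z] (fun _ => (0:ℝ)) := by
    filter_upwards [hnz] with w hw
    obtain ⟨-, -, hCw⟩ := basic_facts Ω hΩ P hC1 hsymm hproj htr hw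
    simp only [hp, hq]
    nlinarith [hCw]
  have hdF : HasFDerivAt (fun y => p y - p y * p y - q y * q y)
      ((fderiv ℝ p z - (p z • fderiv ℝ p z + p z • fderiv ℝ p z))
        - (q z • fderiv ℝ q z + q z • fderiv ℝ q z)) z :=
    (hpdiff.hasFDerivAt.sub (hpdiff.hasFDerivAt.mul hpdiff.hasFDerivAt)).sub
      (hqdiff.hasFDerivAt.mul hqdiff.hasFDerivAt)
  have hdF0 : ((fderiv ℝ p z - (p z • fderiv ℝ p z + p z • fderiv ℝ p z))
      - (q z • fderiv ℝ q z + q z • fderiv ℝ q z)) = 0 := by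
    rw [← hdF.fderiv, Filter.EventuallyEq.fderiv_eq hFz]
    exact fderiv_const_apply 0
  have hD : ∀ j : Fin 2, (1 - 2 * p z) * pd j p z = 2 * q z * pd j q z := by
    intro j
    have := DFunLike.congr_fun hdF0 (Pi.single j 1)
    simp only [ContinuousLinearMap.sub_apply, ContinuousLinearMap.add_apply,
      ContinuousLinearMap.smul_apply, ContinuousLinearMap.zero_apply, smul_eq_mul] at this
    simp only [pd]
    linarith [this]
  -- eikonal components
  have heikz := heik z hz
  have hcomp : ∀ i : Fin 2, P z i 0 * matDiv P z 0 + P z i 1 * matDiv P z 1 = 0 := by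
    intro i
    have := congrFun heikz i
    rwa [Matrix.mulVec, dotProduct, Fin.sum_univ_two] at this
  -- rewrite matDiv components
  have h10f : (fun y => P y 1 0) =ᶠ[nhds z] q := by
    filter_upwards [hnz] with w hw
    exact ((hsymm w hw).apply 0 1)
  have h11f : (fun y => P y 1 1) =ᶠ[nhds z] (fun y => 1 - p y) := by
    filter_upwards [hnz] with w hw
    obtain ⟨-, h11, -⟩ := basic_facts Ω hΩ P hC1 hsymm hproj htr hw
    exact h11
  have hm0 : matDiv P z 0 = pd 0 p z + pd 1 q z := rfl
  have hm1 : matDiv P z 1 = pd 0 q z - pd 1 p z := by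
    have e1 : pd 0 (fun y => P y 1 0) z = pd 0 q z := by
      simp only [pd]; rw [Filter.EventuallyEq.fderiv_eq h10f]
    have e2 : pd 1 (fun y => P y 1 1) z = - pd 1 p z := by
      simp only [pd]
      rw [Filter.EventuallyEq.fderiv_eq h11f]
      have : HasFDerivAt (fun y => 1 - p y) (-(fderiv ℝ p z)) z := hpdiff.hasFDerivAt.const_sub 1
      rw [this.fderiv]
      simp
    simp only [matDiv, e1, e2]
    ring
  obtain ⟨h10, h11, -⟩ := basic_facts Ω hΩ P hC1 hsymm hproj htr hz
  have hE1 : p z * (pd 0 p z + pd 1 q z) + q z * (pd 0 q z - pd 1 p z) = 0 := by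
    have := hcomp 0
    rwa [hm0, hm1] at this
  have hE2 : q z * (pd 0 p z + pd 1 q z) + (1 - p z) * (pd 0 q z - pd 1 p z) = 0 := by
    have := hcomp 1
    rw [hm0, hm1, h10, h11] at this
    linarith [this]
  have hCz' : p z - (p z)^2 = (q z)^2 := hCz
  exact keyT (p z) (q z) (pd 0 p z) (pd 1 p z) (pd 0 q z) (pd 1 q z)
    hCz' (hD 0) (hD 1) hE1 hE2

end

set_option maxHeartbeats 1000000 in
/-- Let `Ω ⊆ ℝ²` be open and `P : Ω → ℝ^{2×2}` continuously differentiable, with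
`P(x)` a rank-one orthogonal projection (symmetric, `P² = P`, `trace P = 1`) and
`P(x) div P(x) = 0` for every `x ∈ Ω`. If the closed segment `L` from `x₀` to `x₁`
lies in `Ω` and `P(x₀)(x₁ − x₀) = 0`, then `P(y) = P(x₀)` for every `y ∈ L`. -/
theorem stmt5 (Ω : Set (Fin 2 → ℝ)) (hΩ : IsOpen Ω)
    (P : (Fin 2 → ℝ) → Matrix (Fin 2) (Fin 2) ℝ)
    (hC1 : ∀ i j, ContDiffOn ℝ 1 (fun y => P y i j) Ω)
    (hsymm : ∀ x ∈ Ω, (P x).IsSymm)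
    (hproj : ∀ x ∈ Ω, P x * P x = P x)
    (htr : ∀ x ∈ Ω, (P x).trace = 1)
    (heik : ∀ x ∈ Ω, (P x) *ᵥ (matDiv P x) = 0)
    (x₀ x₁ : Fin 2 → ℝ)
    (hseg : segment ℝ x₀ x₁ ⊆ Ω)
    (horth : (P x₀) *ᵥ (x₁ - x₀) = 0) :
    ∀ y ∈ segment ℝ x₀ x₁, P y = P x₀ := by
  have hcs : IsCompact (segment ℝ x₀ x₁) := by
    rw [segment_eq_image']
    exact isCompact_Icc.image (by fun_prop)
  set p : (Fin 2 → ℝ) → ℝ := fun y => P y 0 0 with hpdef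
  set q : (Fin 2 → ℝ) → ℝ := fun y => P y 0 1 with hqdef
  have hx₀ : x₀ ∈ Ω := hseg (left_mem_segment ℝ x₀ x₁)
  set v : Fin 2 → ℝ := x₁ - x₀ with hvdef
  set γ : ℝ → (Fin 2 → ℝ) := fun t => x₀ + t • v with hγdef
  have hγseg : ∀ t ∈ Set.Icc (0:ℝ) 1, γ t ∈ segment ℝ x₀ x₁ := by
    intro t ht; rw [segment_eq_image']; exact ⟨t, ht, rfl⟩
  have hγΩ : ∀ t ∈ Set.Icc (0:ℝ) 1, γ t ∈ Ω := fun t ht => hseg (hγseg t ht)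
  obtain ⟨Mp, hMp⟩ := hcs.exists_bound_of_continuousOn
    (((hC1 0 0).continuousOn_fderiv_of_isOpen hΩ le_rfl).mono hseg)
  obtain ⟨Mq, hMq⟩ := hcs.exists_bound_of_continuousOn
    (((hC1 0 1).continuousOn_fderiv_of_isOpen hΩ le_rfl).mono hseg)
  set M : ℝ := max (max Mp Mq) 0 with hMdef
  have hM0 : (0:ℝ) ≤ M := le_max_right _ _
  have hMP : ∀ z ∈ segment ℝ x₀ x₁, ‖fderiv ℝ p z‖ ≤ M := fun z hz =>
    le_trans (hMp z hz) (le_trans (le_max_left _ _) (le_max_left _ _))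
  have hMQ : ∀ z ∈ segment ℝ x₀ x₁, ‖fderiv ℝ q z‖ ≤ M := fun z hz =>
    le_trans (hMq z hz) (le_trans (le_max_right _ _) (le_max_left _ _))
  set K : ℝ := 2 * M * (|v 0| + |v 1|) with hKdef
  have hK0 : (0:ℝ) ≤ K := by positivity
  obtain ⟨h10₀, h11₀, hC₀⟩ := basic_facts Ω hΩ P hC1 hsymm hproj htr hx₀
  have hK1 : P x₀ 0 0 * v 0 + P x₀ 0 1 * v 1 = 0 := by
    have h := congrFun horth 0
    rw [Matrix.mulVec, dotProduct, Fin.sum_univ_two] at h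
    simpa using h
  have hK2 : P x₀ 0 1 * v 0 + (1 - P x₀ 0 0) * v 1 = 0 := by
    have h := congrFun horth 1
    rw [Matrix.mulVec, dotProduct, Fin.sum_univ_two, h10₀, h11₀] at h
    simpa using h
  have hdp : ∀ t ∈ Set.Icc (0:ℝ) 1,
      HasDerivAt (fun τ => p (γ τ)) ((fderiv ℝ p (γ t)) v) t := by
    intro t ht
    have hdiff : DifferentiableAt ℝ p (γ t) :=
      ((hC1 0 0).contDiffAt (hΩ.mem_nhds (hγΩ t ht))).differentiableAt one_ne_zero
    have hγd : HasDerivAt γ v t := by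
      exact (by simpa using (hasDerivAt_id t).smul_const v : HasDerivAt (fun x : ℝ => x • v) v t).const_add x₀
    exact hdiff.hasFDerivAt.comp_hasDerivAt t hγd
  have hdq : ∀ t ∈ Set.Icc (0:ℝ) 1,
      HasDerivAt (fun τ => q (γ τ)) ((fderiv ℝ q (γ t)) v) t := by
    intro t ht
    have hdiff : DifferentiableAt ℝ q (γ t) :=
      ((hC1 0 1).contDiffAt (hΩ.mem_nhds (hγΩ t ht))).differentiableAt one_ne_zero
    have hγd : HasDerivAt γ v t := by
      exact (by simpa using (hasDerivAt_id t).smul_const v : HasDerivAt (fun x : ℝ => x • v) v t).const_add x₀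
    exact hdiff.hasFDerivAt.comp_hasDerivAt t hγd
  set f : ℝ → ℝ × ℝ := fun τ => (p (γ τ) - p x₀, q (γ τ) - q x₀) with hfdef
  set F : ℝ → ℝ × ℝ := fun τ => ((fderiv ℝ p (γ τ)) v, (fderiv ℝ q (γ τ)) v) with hFdef
  have hfd : ∀ t ∈ Set.Icc (0:ℝ) 1, HasDerivAt f (F t) t := fun t ht =>
    ((hdp t ht).sub_const _).prodMk ((hdq t ht).sub_const _)
  have hfc : ContinuousOn f (Set.Icc 0 1) := fun t ht =>
    ((hfd t ht).continuousAt).continuousWithinAt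
  have hbound : ∀ t ∈ Set.Ico (0:ℝ) 1, ‖F t‖ ≤ K * ‖f t‖ + 0 := by
    intro t ht
    have htI : t ∈ Set.Icc (0:ℝ) 1 := ⟨ht.1, le_of_lt ht.2⟩
    have hzseg := hγseg t htI
    have hzΩ := hγΩ t htI
    obtain ⟨hT1, hT2, hT3, hT4⟩ := keyderiv Ω hΩ P hC1 hsymm hproj htr heik hzΩ
    set z := γ t with hzdef
    set a : ℝ := p z - p x₀ with hadef
    set b : ℝ := q z - q x₀ with hbdef
    have happ : ∀ g : (Fin 2 → ℝ) →L[ℝ] ℝ,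
        g v = v 0 * g (Pi.single 0 1) + v 1 * g (Pi.single 1 1) := by
      intro g
      have hv2 : v = v 0 • (Pi.single 0 1 : Fin 2 → ℝ) + v 1 • (Pi.single 1 1 : Fin 2 → ℝ) := by
        funext i; fin_cases i <;> simp [Pi.single_apply]
      rw [hv2, g.map_add, g.map_smul, g.map_smul]
      simp [smul_eq_mul]
    have hgb : ∀ (g : (Fin 2 → ℝ) →L[ℝ] ℝ) (j : Fin 2) (c : ℝ), ‖g‖ ≤ c →
        |g (Pi.single j 1)| ≤ c := by
      intro g j c hc
      calc |g (Pi.single j 1)| ≤ ‖g‖ * ‖(Pi.single j 1 : Fin 2 → ℝ)‖ := g.le_opNorm _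
        _ = ‖g‖ := by rw [Pi.norm_single]; simp
        _ ≤ c := hc
    -- notation for partials
    have hNf : ‖f t‖ = max |a| |b| := by
      rw [Prod.norm_def]
      simp [hadef, hbdef, Real.norm_eq_abs, hfdef, hzdef]
    have haN : |a| ≤ ‖f t‖ := by rw [hNf]; exact le_max_left _ _
    have hbN : |b| ≤ ‖f t‖ := by rw [hNf]; exact le_max_right _ _
    have hfN0 : (0:ℝ) ≤ ‖f t‖ := norm_nonneg _
    -- the two component bounds
    have hPv : (P z 0 0 * v 0 + P z 0 1 * v 1)^2 + (P z 0 1 * v 0 + (1 - P z 0 0) * v 1)^2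
        = (v 0^2 + v 1^2) * (a^2 + b^2) := by
      have := keyI (P z 0 0) (P z 0 1) (P x₀ 0 0) (P x₀ 0 1) (v 0) (v 1) hC₀ hK1 hK2
      simpa [hadef, hbdef, hpdef, hqdef] using this
    have hcomp : ∀ (g : (Fin 2 → ℝ) →L[ℝ] ℝ),
        (g = fderiv ℝ p z ∨ g = fderiv ℝ q z) → ‖g‖ ≤ M →
        ((P z 0 0 - 1) * g (Pi.single 0 1) + P z 0 1 * g (Pi.single 1 1) = 0) →
        (P z 0 1 * g (Pi.single 0 1) - P z 0 0 * g (Pi.single 1 1) = 0) →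
        |g v| ≤ K * ‖f t‖ := by
      intro g _ hgM hT1' hT2'
      set g0 := g (Pi.single 0 1) with hg0
      set g1 := g (Pi.single 1 1) with hg1
      have hg0M : |g0| ≤ M := hgb g 0 M hgM
      have hg1M : |g1| ≤ M := hgb g 1 M hgM
      have hw : g v = (P z 0 0 * v 0 + P z 0 1 * v 1) * g0
          + (P z 0 1 * v 0 + (1 - P z 0 0) * v 1) * g1 := by
        rw [happ g]
        linear_combination (-(v 0))*hT1' + (-(v 1))*hT2'
      set w0 : ℝ := P z 0 0 * v 0 + P z 0 1 * v 1
      set w1 : ℝ := P z 0 1 * v 0 + (1 - P z 0 0) * v 1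
      have hCS : (w0 * g0 + w1 * g1)^2 ≤ (w0^2 + w1^2) * (g0^2 + g1^2) := by
        nlinarith [sq_nonneg (w0 * g1 - w1 * g0)]
      have hsq : (g v)^2 ≤ (K * ‖f t‖)^2 := by
        rw [hw]
        calc (w0 * g0 + w1 * g1)^2 ≤ (w0^2 + w1^2) * (g0^2 + g1^2) := hCS
          _ = (v 0^2 + v 1^2) * (a^2 + b^2) * (g0^2 + g1^2) := by rw [hPv]
          _ ≤ ((|v 0| + |v 1|)^2) * (2 * ‖f t‖^2) * (2 * M^2) := by
            have h1 : v 0^2 + v 1^2 ≤ (|v 0| + |v 1|)^2 := by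
              nlinarith [abs_nonneg (v 0), abs_nonneg (v 1), sq_abs (v 0), sq_abs (v 1)]
            have sqle : ∀ (x c : ℝ), |x| ≤ c → x^2 ≤ c^2 := by
              intro x c hx
              rw [← sq_abs x]
              exact pow_le_pow_left₀ (abs_nonneg x) hx 2
            have h2 : a^2 + b^2 ≤ 2 * ‖f t‖^2 := by
              have := sqle a _ haN
              have := sqle b _ hbN
              calc a^2 + b^2 ≤ ‖f t‖^2 + ‖f t‖^2 := add_le_add ‹a^2 ≤ _› ‹b^2 ≤ _›
                _ = 2 * ‖f t‖^2 := by ring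
            have h3 : g0^2 + g1^2 ≤ 2 * M^2 := by
              have := sqle g0 _ hg0M
              have := sqle g1 _ hg1M
              calc g0^2 + g1^2 ≤ M^2 + M^2 := add_le_add ‹g0^2 ≤ _› ‹g1^2 ≤ _›
                _ = 2 * M^2 := by ring
            have hA : (0:ℝ) ≤ a^2 + b^2 := by positivity
            have hB : (0:ℝ) ≤ g0^2 + g1^2 := by positivity
            have hVk : (0:ℝ) ≤ (|v 0| + |v 1|)^2 := by positivity
            have hN2 : (0:ℝ) ≤ 2 * ‖f t‖^2 := by positivity
            calc (v 0^2 + v 1^2) * (a^2 + b^2) * (g0^2 + g1^2)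
                ≤ ((|v 0| + |v 1|)^2) * (a^2 + b^2) * (g0^2 + g1^2) := by
                  apply mul_le_mul_of_nonneg_right _ hB
                  exact mul_le_mul_of_nonneg_right h1 hA
              _ ≤ ((|v 0| + |v 1|)^2) * (2 * ‖f t‖^2) * (g0^2 + g1^2) := by
                  apply mul_le_mul_of_nonneg_right _ hB
                  exact mul_le_mul_of_nonneg_left h2 hVk
              _ ≤ ((|v 0| + |v 1|)^2) * (2 * ‖f t‖^2) * (2 * M^2) := by
                  exact mul_le_mul_of_nonneg_left h3 (mul_nonneg hVk hN2)
          _ = (K * ‖f t‖)^2 := by rw [hKdef]; ring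
      have hKN : (0:ℝ) ≤ K * ‖f t‖ := mul_nonneg hK0 hfN0
      exact abs_le.mpr (abs_le_of_sq_le_sq' hsq hKN)
    have hb1 : |(fderiv ℝ p z) v| ≤ K * ‖f t‖ :=
      hcomp _ (Or.inl rfl) (hMP z hzseg) hT1 hT2
    have hb2 : |(fderiv ℝ q z) v| ≤ K * ‖f t‖ :=
      hcomp _ (Or.inr rfl) (hMQ z hzseg) hT3 hT4
    rw [Prod.norm_def]
    simp only [Real.norm_eq_abs, add_zero]
    exact max_le hb1 hb2
  have hf0 : ‖f 0‖ ≤ 0 := by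
    have : f 0 = 0 := by
      simp [hfdef, hγdef]
    rw [this]; simp
  have hgron := norm_le_gronwallBound_of_norm_deriv_right_le hfc
    (fun t ht => (hfd t ⟨ht.1, le_of_lt ht.2⟩).hasDerivWithinAt) hf0 hbound
  intro y hy
  rw [segment_eq_image'] at hy
  obtain ⟨t, htI, hyt⟩ := hy
  have hyγ : y = γ t := hyt.symm
  have hft : f t = 0 := by
    have h := hgron t htI
    rw [gronwallBound_ε0_δ0] at h
    exact norm_le_zero_iff.1 h
  have hpa : p (γ t) = p x₀ := by
    have := congrArg Prod.fst hft
    simpa [hfdef, sub_eq_zero] using this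
  have hqa : q (γ t) = q x₀ := by
    have := congrArg Prod.snd hft
    simpa [hfdef, sub_eq_zero] using this
  obtain ⟨h10z, h11z, -⟩ := basic_facts Ω hΩ P hC1 hsymm hproj htr (hγΩ t htI)
  subst hyγ
  ext i j
  fin_cases i <;> fin_cases j
  · exact hpa
  · exact hqa
  · show P (γ t) 1 0 = P x₀ 1 0
    rw [h10z, h10₀]; exact hqa
  · show P (γ t) 1 1 = P x₀ 1 1
    rw [h11z, h11₀]
    simp only [hpdef] at hpa
    rw [hpa]

end
end
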